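/- Let d ≥ 2 and let P ⊂ ℝ^d be a lattice polytope whose first width is w1 and whose second width is w2. Then P is affine equivalent to a subset of [0, w1] × [0, w2] × ℝ^{d−2}. -/

import Mathlib

open scoped Pointwise

noncomputable section

/-- Embed an integer lattice point into real space. -/
def intEmbed {d : ℕ} (v : Fin d → ℤ) : Fin d → ℝ := fun i => (v i : ℝ)

/-- Pairing of an integer dual vector with a real point. -/
def dualPair {d : ℕ} (u : Fin d → ℤ) (x : Fin d → ℝ) : ℝ := ∑ i, (u i : ℝ) * x i

/-- The width of a set `P ⊆ ℝ^d` with respect to an integer dual vector `u`: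
`max_{x ∈ P} u·x − min_{x ∈ P} u·x`. -/
def widthIn {d : ℕ} (u : Fin d → ℤ) (P : Set (Fin d → ℝ)) : ℝ :=
  sSup (dualPair u '' P) - sInf (dualPair u '' P)

/-- `w` is a tuple of widths of `P` realized by linearly independent dual vectors. -/
def IsWidthTuple {d : ℕ} (P : Set (Fin d → ℝ)) (w : Fin d → ℝ) : Prop :=
  ∃ u : Fin d → (Fin d → ℤ), LinearIndependent ℤ u ∧ ∀ i, widthIn (u i) P = w i

/-- `w` is the multi-width of `P`: the lexicographically minimal width tuple over
linearly independent tuples of dual vectors. -/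
def IsMultiWidth {d : ℕ} (P : Set (Fin d → ℝ)) (w : Fin d → ℝ) : Prop :=
  IsWidthTuple P w ∧ ∀ w' : Fin d → ℝ, IsWidthTuple P w' → toLex w ≤ toLex w'

/-- The affine map `x ↦ A x + b` on real points, with integral `A` and `b`. -/
def unimodMap {d : ℕ} (A : Matrix (Fin d) (Fin d) ℤ) (b : Fin d → ℤ) (x : Fin d → ℝ) :
    Fin d → ℝ :=
  fun i => (∑ j, (A i j : ℝ) * x j) + (b i : ℝ)

/-- Affine unimodular equivalence of subsets of `ℝ^d`: `Q = A·P + b` with `A ∈ GL_d(ℤ)`,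
`b ∈ ℤ^d`. -/
def AffEquiv {d : ℕ} (P Q : Set (Fin d → ℝ)) : Prop :=
  ∃ A : Matrix (Fin d) (Fin d) ℤ, IsUnit A.det ∧ ∃ b : Fin d → ℤ, Q = unimodMap A b '' P

/-- A lattice polytope: the convex hull of finitely many lattice points. -/
def IsLatticePolytope {d : ℕ} (P : Set (Fin d → ℝ)) : Prop :=
  ∃ V : Finset (Fin d → ℤ), V.Nonempty ∧ P = convexHull ℝ (intEmbed '' (V : Set (Fin d → ℤ)))

/-- A lattice tetrahedron: the convex hull of 4 affinely independent lattice points in `ℝ³`. -/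
def IsLatticeTetrahedron (P : Set (Fin 3 → ℝ)) : Prop :=
  ∃ v : Fin 4 → (Fin 3 → ℤ), AffineIndependent ℝ (fun i => intEmbed (v i)) ∧
    P = convexHull ℝ (Set.range fun i => intEmbed (v i))

/-- The type of affine equivalence classes of lattice tetrahedra with multi-width `w`. -/
def TetClasses (w : Fin 3 → ℝ) : Type :=
  Quot fun P Q : {P : Set (Fin 3 → ℝ) // IsLatticeTetrahedron P ∧ IsMultiWidth P w} =>
    AffEquiv P.1 Q.1

/-- The real points of a multiset of lattice points. -/
def msetPts {d : ℕ} (S : Multiset (Fin d → ℤ)) : Set (Fin d → ℝ) :=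
  intEmbed '' {v | v ∈ S}

/-- The convex hull of a multiset of lattice points. -/
def msetHull {d : ℕ} (S : Multiset (Fin d → ℤ)) : Set (Fin d → ℝ) :=
  convexHull ℝ (msetPts S)

/-- Affine unimodular equivalence of multisets of lattice points. -/
def MsetEquiv {d : ℕ} (S T : Multiset (Fin d → ℤ)) : Prop :=
  ∃ A : Matrix (Fin d) (Fin d) ℤ, IsUnit A.det ∧ ∃ b : Fin d → ℤ,
    S.map (fun v => A.mulVec v + b) = T

/-- Affine unimodular equivalence of multisets of integers (`d = 1`). -/
def MsetEquivZ (S T : Multiset ℤ) : Prop :=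
  ∃ a : ℤ, IsUnit a ∧ ∃ b : ℤ, S.map (fun x => a * x + b) = T

/-- The width of a multiset of integers (the width of its convex hull). -/
def widthZ (S : Multiset ℤ) : ℝ :=
  sSup ((fun n : ℤ => (n : ℝ)) '' {n | n ∈ S}) - sInf ((fun n : ℤ => (n : ℝ)) '' {n | n ∈ S})

/-- `S` has a dual vector `u` of width `w1` whose image multiset `u·S` is affine
equivalent in `ℤ` to the multiset `L`. -/
def HasLineType (w1 : ℤ) (L : Multiset ℤ) (S : Multiset (Fin 2 → ℤ)) : Prop :=
  ∃ u : Fin 2 → ℤ, widthIn u (msetHull S) = (w1 : ℝ) ∧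
    MsetEquivZ (S.map fun v => ∑ i, u i * v i) L

namespace StripAux

variable {d : ℕ}

/-- integer pairing -/
def ip (u v : Fin d → ℤ) : ℤ := ∑ i, u i * v i

lemma dualPair_intEmbed (u v : Fin d → ℤ) : dualPair u (intEmbed v) = (ip u v : ℝ) := by
  simp [dualPair, intEmbed, ip]

lemma isLinearMap_dualPair (u : Fin d → ℤ) : IsLinearMap ℝ (dualPair u) := by
  constructor
  · intro x y
    simp [dualPair, mul_add, Finset.sum_add_distrib]
  · intro c x
    simp only [dualPair, Finset.mul_sum, smul_eq_mul, Pi.smul_apply]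
    exact Finset.sum_congr rfl fun i _ => by ring

variable (V : Finset (Fin d → ℤ)) (hV : V.Nonempty)

/-- max of pairing over V -/
def supV (u : Fin d → ℤ) : ℤ := V.sup' hV (ip u)

def infV (u : Fin d → ℤ) : ℤ := V.inf' hV (ip u)

lemma mem_Icc_of_mem_hull (u : Fin d → ℤ) {y : Fin d → ℝ}
    (hy : y ∈ convexHull ℝ (intEmbed '' (V : Set (Fin d → ℤ)))) :
    dualPair u y ∈ Set.Icc ((infV V hV u : ℤ) : ℝ) ((supV V hV u : ℤ) : ℝ) := by
  have hconv : Convex ℝ {x : Fin d → ℝ |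
      dualPair u x ∈ Set.Icc ((infV V hV u : ℤ) : ℝ) ((supV V hV u : ℤ) : ℝ)} := by
    have h1 := convex_halfSpace_le (𝕜 := ℝ) (isLinearMap_dualPair u) ((supV V hV u : ℤ) : ℝ)
    have h2 := convex_halfSpace_ge (𝕜 := ℝ) (isLinearMap_dualPair u) ((infV V hV u : ℤ) : ℝ)
    have : {x : Fin d → ℝ | dualPair u x ∈ Set.Icc ((infV V hV u : ℤ) : ℝ) ((supV V hV u : ℤ) : ℝ)}
        = {x | ((infV V hV u : ℤ) : ℝ) ≤ dualPair u x} ∩ {x | dualPair u x ≤ ((supV V hV u : ℤ) : ℝ)} := by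
      ext x; simp only [Set.mem_Icc, Set.mem_setOf_eq, Set.mem_inter_iff]
    rw [this]
    exact h2.inter h1
  have hsub : intEmbed '' (V : Set (Fin d → ℤ)) ⊆ {x : Fin d → ℝ |
      dualPair u x ∈ Set.Icc ((infV V hV u : ℤ) : ℝ) ((supV V hV u : ℤ) : ℝ)} := by
    rintro _ ⟨v, hv, rfl⟩
    simp only [Set.mem_setOf_eq, dualPair_intEmbed, Set.mem_Icc, Int.cast_le]
    exact ⟨Finset.inf'_le _ hv, Finset.le_sup' _ hv⟩
  exact convexHull_min hsub hconv hy


include hV in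
lemma hull_nonempty : (convexHull ℝ (intEmbed '' (V : Set (Fin d → ℤ)))).Nonempty := by
  obtain ⟨v, hv⟩ := hV
  exact ⟨intEmbed v, subset_convexHull _ _ ⟨v, hv, rfl⟩⟩

lemma sSup_image_eq (u : Fin d → ℤ) :
    sSup (dualPair u '' convexHull ℝ (intEmbed '' (V : Set (Fin d → ℤ)))) = ((supV V hV u : ℤ) : ℝ) := by
  set P := convexHull ℝ (intEmbed '' (V : Set (Fin d → ℤ))) with hP
  have hne : (dualPair u '' P).Nonempty := (hull_nonempty V hV).image _
  have hub : ∀ z ∈ dualPair u '' P, z ≤ ((supV V hV u : ℤ) : ℝ) := by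
    rintro _ ⟨y, hy, rfl⟩
    exact (mem_Icc_of_mem_hull V hV u hy).2
  apply le_antisymm
  · exact csSup_le hne hub
  · obtain ⟨v0, hv0, hs⟩ := V.exists_mem_eq_sup' hV (ip u)
    have hmem : ((supV V hV u : ℤ) : ℝ) ∈ dualPair u '' P := by
      refine ⟨intEmbed v0, subset_convexHull _ _ ⟨v0, hv0, rfl⟩, ?_⟩
      rw [dualPair_intEmbed]
      norm_cast
      exact hs.symm
    exact le_csSup ⟨_, hub⟩ hmem

lemma sInf_image_eq (u : Fin d → ℤ) :
    sInf (dualPair u '' convexHull ℝ (intEmbed '' (V : Set (Fin d → ℤ)))) = ((infV V hV u : ℤ) : ℝ) := by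
  set P := convexHull ℝ (intEmbed '' (V : Set (Fin d → ℤ))) with hP
  have hne : (dualPair u '' P).Nonempty := (hull_nonempty V hV).image _
  have hlb : ∀ z ∈ dualPair u '' P, ((infV V hV u : ℤ) : ℝ) ≤ z := by
    rintro _ ⟨y, hy, rfl⟩
    exact (mem_Icc_of_mem_hull V hV u hy).1
  apply le_antisymm
  · obtain ⟨v0, hv0, hs⟩ := V.exists_mem_eq_inf' hV (ip u)
    have hmem : ((infV V hV u : ℤ) : ℝ) ∈ dualPair u '' P := by
      refine ⟨intEmbed v0, subset_convexHull _ _ ⟨v0, hv0, rfl⟩, ?_⟩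
      rw [dualPair_intEmbed]
      norm_cast
      exact hs.symm
    exact csInf_le ⟨_, hlb⟩ hmem
  · exact le_csInf hne hlb

/-- the integer width of the hull of `V` w.r.t. `u` -/
def Wd (u : Fin d → ℤ) : ℤ := supV V hV u - infV V hV u

lemma widthIn_eq_Wd (u : Fin d → ℤ) :
    widthIn u (convexHull ℝ (intEmbed '' (V : Set (Fin d → ℤ)))) = ((Wd V hV u : ℤ) : ℝ) := by
  rw [widthIn, sSup_image_eq V hV u, sInf_image_eq V hV u, Wd]
  push_cast
  ring

lemma infV_le_supV (u : Fin d → ℤ) : infV V hV u ≤ supV V hV u := by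
  obtain ⟨v, hv⟩ := hV
  exact le_trans (Finset.inf'_le _ hv) (Finset.le_sup' _ hv)

lemma Wd_nonneg (u : Fin d → ℤ) : 0 ≤ Wd V hV u := sub_nonneg.2 (infV_le_supV V hV u)

lemma ip_smul (k : ℤ) (u v : Fin d → ℤ) : ip (k • u) v = k * ip u v := by
  simp [ip, Finset.mul_sum, mul_assoc]

lemma ip_sub (x y v : Fin d → ℤ) : ip (x - y) v = ip x v - ip y v := by
  simp [ip, sub_mul, Finset.sum_sub_distrib]

lemma supV_smul {k : ℤ} (hk : 0 ≤ k) (u : Fin d → ℤ) :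
    supV V hV (k • u) = k * supV V hV u := by
  unfold supV
  obtain ⟨v0, hv0, hs⟩ := V.exists_mem_eq_sup' hV (ip u)
  apply le_antisymm
  · apply Finset.sup'_le
    intro v hv
    rw [ip_smul]
    exact mul_le_mul_of_nonneg_left (Finset.le_sup' _ hv) hk
  · rw [hs]
    have : k * ip u v0 = ip (k • u) v0 := (ip_smul k u v0).symm
    rw [this]
    exact Finset.le_sup' _ hv0

lemma infV_smul {k : ℤ} (hk : 0 ≤ k) (u : Fin d → ℤ) :
    infV V hV (k • u) = k * infV V hV u := by
  unfold infV
  obtain ⟨v0, hv0, hs⟩ := V.exists_mem_eq_inf' hV (ip u)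
  apply le_antisymm
  · rw [hs]
    have : k * ip u v0 = ip (k • u) v0 := (ip_smul k u v0).symm
    rw [this]
    exact Finset.inf'_le _ hv0
  · apply Finset.le_inf'
    intro v hv
    rw [ip_smul]
    exact mul_le_mul_of_nonneg_left (Finset.inf'_le _ hv) hk

lemma Wd_smul {k : ℤ} (hk : 0 ≤ k) (u : Fin d → ℤ) :
    Wd V hV (k • u) = k * Wd V hV u := by
  rw [Wd, Wd, supV_smul V hV hk, infV_smul V hV hk]
  ring

lemma Wd_sub_le (x y : Fin d → ℤ) : Wd V hV (x - y) ≤ Wd V hV x + Wd V hV y := by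
  have h1 : supV V hV (x - y) ≤ supV V hV x - infV V hV y := by
    apply Finset.sup'_le
    intro v hv
    rw [ip_sub]
    exact sub_le_sub (Finset.le_sup' _ hv) (Finset.inf'_le _ hv)
  have h2 : infV V hV x - supV V hV y ≤ infV V hV (x - y) := by
    apply Finset.le_inf'
    intro v hv
    rw [ip_sub]
    exact sub_le_sub (Finset.inf'_le _ hv) (Finset.le_sup' _ hv)
  rw [Wd, Wd, Wd]
  omega


lemma lex_head_le {w w' : Fin d → ℝ} (i0 : Fin d) (hi0 : i0.val = 0)
    (h : toLex w ≤ toLex w') : w i0 ≤ w' i0 := by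
  rcases eq_or_lt_of_le h with heq | hlt
  · have : w = w' := toLex_inj.mp heq
    rw [this]
  · obtain ⟨i, hbefore, hi⟩ := hlt
    by_cases hii : i = i0
    · subst hii; exact le_of_lt hi
    · have : i0 < i := by
        have : 0 < i.val := by
          rcases Nat.eq_zero_or_pos i.val with h0 | h0
          · exact absurd (Fin.ext (by omega)) hii
          · exact h0
        exact Fin.lt_def.mpr (by omega)
      exact le_of_eq (hbefore i0 this)

lemma sum_ite_pair (a b : Fin d) (hab : a ≠ b) (s t : ℤ) (h : Fin d → ℤ) :
    ∑ k, (if k = a then s else if k = b then t else 0) * h k = s * h a + t * h b := by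
  have : ∀ k : Fin d, (if k = a then s else if k = b then t else 0) * h k
      = (if k = a then s * h k else 0) + (if k = b then t * h k else 0) := by
    intro k
    by_cases h1 : k = a
    · subst h1
      simp [hab]
    · by_cases h2 : k = b <;> simp [h1, h2, Ne.symm hab]
  rw [Finset.sum_congr rfl fun k _ => this k, Finset.sum_add_distrib,
    Finset.sum_ite_eq' Finset.univ a (fun k => s * h k),
    Finset.sum_ite_eq' Finset.univ b (fun k => t * h k)]
  simp

lemma sum_ite_single (a : Fin d) (s : ℤ) (h : Fin d → ℤ) :
    ∑ k, (if k = a then s else 0) * h k = s * h a := by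
  have : ∀ k : Fin d, (if k = a then s else 0) * h k = (if k = a then s * h k else 0) := by
    intro k; by_cases h1 : k = a <;> simp [h1]
  rw [Finset.sum_congr rfl fun k _ => this k, Finset.sum_ite_eq' Finset.univ a (fun k => s * h k)]
  simp

lemma isUnit_rowPerm_det (bM : Module.Basis (Fin d) ℤ (Fin d → ℤ)) (τ : Equiv.Perm (Fin d)) :
    IsUnit (Matrix.of (fun i j => bM (τ i) j)).det := by
  classical
  set T : Matrix (Fin d) (Fin d) ℤ := (Pi.basisFun ℤ (Fin d)).toMatrix bM with hT
  have hTT : T.transpose = Matrix.of (fun i j => bM i j) := by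
    ext i j
    simp [hT, Matrix.transpose_apply, Module.Basis.toMatrix_apply]
  haveI : Invertible T := (Pi.basisFun ℤ (Fin d)).invertibleToMatrix bM
  have hTdet : IsUnit T.det := Matrix.isUnit_det_of_invertible T
  have hmat : Matrix.of (fun i j => bM (τ i) j) = T.transpose.submatrix (⇑τ) id := by
    ext i j
    simp [hTT]
  have hperm := Matrix.det_permute τ T.transpose
  rw [hmat]
  have : (T.transpose.submatrix (⇑τ) id).det = ((Equiv.Perm.sign τ : ℤˣ) : ℤ) * T.transpose.det := hperm
  rw [this, Matrix.det_transpose]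
  exact (Equiv.Perm.sign τ).isUnit.mul hTdet


lemma exists_smith_pair (u0 u2 : Fin d → ℤ) (hli : LinearIndependent ℤ ![u0, u2]) :
    ∃ (bM : Module.Basis (Fin d) ℤ (Fin d → ℤ)) (f : Fin 2 ↪ Fin d) (α' β' γ δ : ℤ),
      u0 = α' • bM (f 0) + β' • bM (f 1) ∧ u2 = γ • bM (f 0) + δ • bM (f 1) := by
  classical
  set N : Submodule ℤ (Fin d → ℤ) := Submodule.span ℤ (Set.range ![u0, u2]) with hN
  obtain ⟨n, snf⟩ := Submodule.smithNormalForm (Pi.basisFun ℤ (Fin d)) N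
  -- build rank-2 basis of N from the pair
  have hmem : ∀ i : Fin 2, (![u0, u2] i) ∈ N := fun i =>
    Submodule.subset_span (Set.mem_range_self i)
  set P2 : Fin 2 → N := fun i => ⟨![u0, u2] i, hmem i⟩ with hP2
  have hcomp : N.subtype ∘ P2 = ![u0, u2] := by
    funext i; rfl
  have hP2li : LinearIndependent ℤ P2 := by
    apply LinearIndependent.of_comp N.subtype
    rw [hcomp]
    exact hli
  have hspan : ⊤ ≤ Submodule.span ℤ (Set.range P2) := by
    have hinj := Submodule.map_injective_of_injective N.injective_subtype
    have hmap : Submodule.map N.subtype (Submodule.span ℤ (Set.range P2))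
        = Submodule.map N.subtype ⊤ := by
      rw [Submodule.map_span, Submodule.map_subtype_top, ← Set.range_comp, hcomp, hN]
    exact le_of_eq (hinj hmap).symm
  have hn2 : n = 2 := by
    have e := snf.bN.indexEquiv (Module.Basis.mk hP2li hspan)
    simpa using Fintype.card_congr e
  subst hn2
  refine ⟨snf.bM, snf.f, snf.bN.repr ⟨u0, hmem 0⟩ 0 * snf.a 0,
    snf.bN.repr ⟨u0, hmem 0⟩ 1 * snf.a 1,
    snf.bN.repr ⟨u2, hmem 1⟩ 0 * snf.a 0,
    snf.bN.repr ⟨u2, hmem 1⟩ 1 * snf.a 1, ?_, ?_⟩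
  · have hrepr := snf.bN.sum_repr ⟨u0, hmem 0⟩
    have hco := congrArg (Subtype.val : N → (Fin d → ℤ)) hrepr
    rw [Fin.sum_univ_two] at hco
    push_cast at hco
    rw [snf.snf 0, snf.snf 1, smul_smul, smul_smul] at hco
    exact hco.symm
  · have hrepr := snf.bN.sum_repr ⟨u2, hmem 1⟩
    have hco := congrArg (Subtype.val : N → (Fin d → ℤ)) hrepr
    rw [Fin.sum_univ_two] at hco
    push_cast at hco
    rw [snf.snf 0, snf.snf 1, smul_smul, smul_smul] at hco
    exact hco.symm


lemma exists_perm {a b i0 i1 : Fin d} (hab : a ≠ b) (h01 : i0 ≠ i1) :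
    ∃ τ : Equiv.Perm (Fin d), τ i0 = a ∧ τ i1 = b := by
  classical
  set s1 := Equiv.swap i0 a with hs1
  set b' := s1.symm b with hb'
  have hb'0 : i0 ≠ b' := by
    intro h
    apply hab
    have : s1 i0 = s1 b' := congrArg s1 h
    rw [hb', Equiv.apply_symm_apply, hs1, Equiv.swap_apply_left] at this
    exact this
  refine ⟨(Equiv.swap i1 b').trans s1, ?_, ?_⟩
  · rw [Equiv.trans_apply, Equiv.swap_apply_of_ne_of_ne h01 hb'0, hs1, Equiv.swap_apply_left]
  · rw [Equiv.trans_apply, Equiv.swap_apply_left, hb', Equiv.apply_symm_apply]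

end StripAux

open StripAux in
set_option maxHeartbeats 1600000 in
/-- A lattice polytope in `ℝ^d` (`d ≥ 2`) with first width `w₁` and second width `w₂`
is affine equivalent to a subset of `[0, w₁] × [0, w₂] × ℝ^{d−2}`. -/
theorem polytope_in_strip (d : ℕ) (hd : 2 ≤ d) (P : Set (Fin d → ℝ))
    (hP : IsLatticePolytope P) (w : Fin d → ℝ) (hmw : IsMultiWidth P w) (w1 w2 : ℤ)
    (h1 : w ⟨0, by omega⟩ = (w1 : ℝ)) (h2 : w ⟨1, by omega⟩ = (w2 : ℝ)) :
    ∃ Q : Set (Fin d → ℝ), AffEquiv P Q ∧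
      ∀ x ∈ Q, x ⟨0, by omega⟩ ∈ Set.Icc (0 : ℝ) (w1 : ℝ) ∧
        x ⟨1, by omega⟩ ∈ Set.Icc (0 : ℝ) (w2 : ℝ) := by
  classical
  obtain ⟨V, hV, hPV⟩ := hP
  obtain ⟨⟨u, hu_li, hu_w⟩, hmin⟩ := hmw
  set i0 : Fin d := ⟨0, by omega⟩ with hi0
  set i1 : Fin d := ⟨1, by omega⟩ with hi1
  have h01 : i0 ≠ i1 := by simp [hi0, hi1, Fin.ext_iff]
  have hww1 : w i0 = (w1 : ℝ) := h1
  have hww2 : w i1 = (w2 : ℝ) := h2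
  have hwidth : ∀ uu : Fin d → ℤ, widthIn uu P = ((Wd V hV uu : ℤ) : ℝ) := by
    intro uu; rw [hPV]; exact widthIn_eq_Wd V hV uu
  have hw1Z : Wd V hV (u i0) = w1 := by
    have := (hwidth (u i0)).symm.trans ((hu_w i0).trans hww1)
    exact_mod_cast this
  have hw2Z : Wd V hV (u i1) = w2 := by
    have := (hwidth (u i1)).symm.trans ((hu_w i1).trans hww2)
    exact_mod_cast this
  have hw1nn : 0 ≤ w1 := hw1Z ▸ Wd_nonneg V hV (u i0)
  have hw2nn : 0 ≤ w2 := hw2Z ▸ Wd_nonneg V hV (u i1)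
  -- w1 ≤ w2 by lexicographic minimality
  have hw12Z : w1 ≤ w2 := by
    have hswap : ∃ u' : Fin d → (Fin d → ℤ), LinearIndependent ℤ u' ∧
        ∀ i, widthIn (u' i) P = (w ∘ (Equiv.swap i0 i1)) i :=
      ⟨u ∘ (Equiv.swap i0 i1), hu_li.comp _ (Equiv.injective _),
        fun i => hu_w (Equiv.swap i0 i1 i)⟩
    have hlex := hmin _ hswap
    have h0le := lex_head_le i0 rfl hlex
    rw [Function.comp_apply, Equiv.swap_apply_left, hww1, hww2] at h0le
    exact_mod_cast h0le
  -- the linearly independent pair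
  have hg2 : Function.Injective ![i0, i1] := by
    intro a b hab
    fin_cases a <;> fin_cases b <;> simp_all
  have hpair : LinearIndependent ℤ ![u i0, u i1] := by
    have h' := hu_li.comp ![i0, i1] hg2
    have heq : u ∘ ![i0, i1] = ![u i0, u i1] := by
      funext j; fin_cases j <;> rfl
    rwa [heq] at h'
  obtain ⟨bM, f, α', β', γ, δ, hu0eq, hu2eq⟩ := exists_smith_pair (u i0) (u i1) hpair
  set e1 : Fin d → ℤ := bM (f 0) with he1
  set e2 : Fin d → ℤ := bM (f 1) with he2
  clear_value e1 e2
  -- gcd and primitive part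
  have hu0ne : u i0 ≠ 0 := by
    have := hpair.ne_zero 0
    simpa using this
  have hαβ : α' ≠ 0 ∨ β' ≠ 0 := by
    by_contra hcon
    push_neg at hcon
    apply hu0ne
    rw [hu0eq, hcon.1, hcon.2]
    simp
  set g : ℤ := (Int.gcd α' β' : ℤ) with hgdef
  have hgpos : 0 < g := by
    rw [hgdef]
    exact_mod_cast Int.gcd_pos_iff.mpr hαβ
  obtain ⟨α, hα⟩ : g ∣ α' := Int.gcd_dvd_left α' β'
  obtain ⟨β, hβ⟩ : g ∣ β' := Int.gcd_dvd_right α' β'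
  have hαeq : α = α' / g := by rw [hα]; exact (Int.mul_ediv_cancel_left _ (ne_of_gt hgpos)).symm
  have hβeq : β = β' / g := by rw [hβ]; exact (Int.mul_ediv_cancel_left _ (ne_of_gt hgpos)).symm
  have hgcd1 : Int.gcd α β = 1 := by
    rw [hαeq, hβeq, hgdef]
    exact Int.gcd_div_gcd_div_gcd (Int.gcd_pos_iff.mpr hαβ)
  set A' : ℤ := Int.gcdA α β with hA'
  set B' : ℤ := Int.gcdB α β with hB'
  have hBez : 1 = α * A' + β * B' := by
    have := Int.gcd_eq_gcd_ab α β
    rw [hgcd1] at this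
    exact_mod_cast this
  set p : Fin d → ℤ := α • e1 + β • e2 with hp
  clear_value p
  have hu0p : u i0 = g • p := by
    rw [hu0eq, hα, hβ, hp, smul_add, smul_smul, smul_smul]
  -- coordinates of u i1 over the basis (p, v)
  set m : ℤ := γ * A' + δ * B' with hm
  set c : ℤ := δ * α - γ * β with hc
  have hc0 : c ≠ 0 := by
    intro hcz
    have hczz : δ * α - γ * β = 0 := by rw [← hc]; exact hcz
    have hγ : γ = m * α := by
      rw [hm]
      linear_combination γ * hBez - B' * hczz
    have hδ : δ = m * β := by
      rw [hm]
      linear_combination δ * hBez + A' * hczz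
    have hu2p : u i1 = m • p := by
      rw [hu2eq, hγ, hδ, hp, smul_add, smul_smul, smul_smul]
    have hzero : ∑ j : Fin 2, ![-m, g] j • ![u i0, u i1] j = 0 := by
      rw [Fin.sum_univ_two]
      simp only [Matrix.cons_val_zero, Matrix.cons_val_one, Matrix.head_cons]
      rw [hu2p, hu0p, smul_smul, smul_smul, ← add_smul]
      have hz : -m * g + g * m = 0 := by ring
      rw [hz, zero_smul]
    have := Fintype.linearIndependent_iff.mp hpair (![-m, g]) hzero 1
    simp at this
    omega
  clear_value g A' B' m c
  -- normalize the sign of c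
  set ε : ℤ := if c < 0 then -1 else 1 with hε
  have hε2 : ε * ε = 1 := by
    rw [hε]; by_cases h : c < 0 <;> simp [h]
  set c1 : ℤ := ε * c with hc1
  have hc1pos : 0 < c1 := by
    rw [hc1, hε]
    by_cases h : c < 0
    · simp only [h, if_true]; omega
    · simp only [h, if_false]; omega
  set q : ℤ := m / c1 with hq
  set r : ℤ := m % c1 with hr
  have hr0 : 0 ≤ r := Int.emod_nonneg m (ne_of_gt hc1pos)
  have hrlt : r < c1 := Int.emod_lt_of_pos m hc1pos
  have hqr : c1 * q + r = m := Int.mul_ediv_add_emod m c1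
  clear_value ε c1 q r
  clear hq hr
  set α₂ : ℤ := ε * (-B') + q * α with hα₂
  set β₂ : ℤ := ε * A' + q * β with hβ₂
  set v' : Fin d → ℤ := α₂ • e1 + β₂ • e2 with hv'
  clear_value α₂ β₂ v'
  have hdet2 : α * β₂ - β * α₂ = ε := by
    rw [hα₂, hβ₂]
    linear_combination (-ε) * hBez
  have hqr' : ε * c * q + r = m := by rw [← hc1]; exact hqr
  have hcoord1 : γ = r * α + c1 * α₂ := by
    have hx1 : γ = m * α - c * B' := by
      rw [hm, hc]
      linear_combination γ * hBez
    rw [hα₂, hc1]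
    linear_combination hx1 - α * hqr' + (c * B') * hε2
  have hcoord2 : δ = r * β + c1 * β₂ := by
    have hx2 : δ = m * β + c * A' := by
      rw [hm, hc]
      linear_combination δ * hBez
    rw [hβ₂, hc1]
    linear_combination hx2 - β * hqr' - (c * A') * hε2
  have hu2v : u i1 = r • p + c1 • v' := by
    rw [hu2eq, hcoord1, hcoord2, hp, hv', smul_add, smul_add, smul_smul, smul_smul,
      smul_smul, smul_smul, add_smul, add_smul]
    abel
  -- width bounds for p and v'
  have hWp_le : Wd V hV p ≤ w1 := by
    have h := Wd_smul V hV (le_of_lt hgpos) p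
    rw [← hu0p, hw1Z] at h
    nlinarith [Wd_nonneg V hV p, mul_nonneg (by omega : (0:ℤ) ≤ g - 1) (Wd_nonneg V hV p)]
  have hWv_le : Wd V hV v' ≤ w2 := by
    have hsub : c1 • v' = u i1 - r • p := by rw [hu2v]; abel
    have hx1 : Wd V hV (c1 • v') = c1 * Wd V hV v' := Wd_smul V hV (le_of_lt hc1pos) v'
    have hx2 : Wd V hV (r • p) = r * Wd V hV p := Wd_smul V hV hr0 p
    have hx3 := Wd_sub_le V hV (u i1) (r • p)
    rw [← hsub, hx1, hx2, hw2Z] at hx3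
    have hstep : r * Wd V hV p ≤ (c1 - 1) * w2 := by
      have f1 : r * Wd V hV p ≤ r * w1 := mul_le_mul_of_nonneg_left hWp_le hr0
      have f2 : r * w1 ≤ (c1 - 1) * w1 := mul_le_mul_of_nonneg_right (by omega) hw1nn
      have f3 : (c1 - 1) * w1 ≤ (c1 - 1) * w2 := mul_le_mul_of_nonneg_left hw12Z (by omega)
      linarith
    have hfin : c1 * Wd V hV v' ≤ c1 * w2 := by linarith
    exact le_of_mul_le_mul_left hfin hc1pos
  -- permutation lining up the basis with coordinates 0, 1
  have hf01 : f 0 ≠ f 1 := by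
    intro h
    exact absurd (f.injective h) (by decide)
  obtain ⟨τ, hτ0, hτ1⟩ := exists_perm hf01 h01
  set M : Matrix (Fin d) (Fin d) ℤ := Matrix.of (fun i j => bM (τ i) j) with hM
  set A : Matrix (Fin d) (Fin d) ℤ := Matrix.of (fun i j =>
    if i = i0 then p j else if i = i1 then v' j else bM (τ i) j) with hA
  set C : Matrix (Fin d) (Fin d) ℤ := Matrix.of (fun i k =>
    if i = i0 then (if k = i0 then α else if k = i1 then β else 0)
    else if i = i1 then (if k = i0 then α₂ else if k = i1 then β₂ else 0)
    else (if k = i then 1 else 0)) with hC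
  clear_value M A C
  have hACM : A = C * M := by
    ext i j
    rw [hA, hC, hM, Matrix.mul_apply]
    simp only [Matrix.of_apply]
    by_cases hi : i = i0
    · subst hi
      simp only [eq_self_iff_true, if_true]
      rw [sum_ite_pair i0 i1 h01 α β (fun k => bM (τ k) j), hτ0, hτ1]
      simp [hp, he1, he2]
    · by_cases hi1x : i = i1
      · subst hi1x
        simp only [if_neg hi, eq_self_iff_true, if_true]
        rw [sum_ite_pair i0 i1 h01 α₂ β₂ (fun k => bM (τ k) j), hτ0, hτ1]
        simp [hv', he1, he2]
      · simp only [if_neg hi, if_neg hi1x]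
        rw [sum_ite_single i 1 (fun k => bM (τ k) j), one_mul]
  have hdetA : IsUnit A.det := by
    rw [hACM, Matrix.det_mul]
    have hdetM : IsUnit M.det := by rw [hM]; exact isUnit_rowPerm_det bM τ
    have hdetC : IsUnit C.det := by
      set D : Matrix (Fin d) (Fin d) ℤ := Matrix.of (fun k j =>
        if k = i0 then (if j = i0 then ε * β₂ else if j = i1 then -(ε * β) else 0)
        else if k = i1 then (if j = i0 then -(ε * α₂) else if j = i1 then ε * α else 0)
        else (if j = k then 1 else 0)) with hD
      clear_value D
      apply Matrix.isUnit_det_of_right_inverse (B := D)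
      ext i j
      rw [hC, hD, Matrix.mul_apply, Matrix.one_apply]
      simp only [Matrix.of_apply]
      by_cases hi : i = i0
      · subst hi
        simp only [eq_self_iff_true, if_true]
        rw [sum_ite_pair i0 i1 h01 α β _]
        simp only [eq_self_iff_true, if_true, if_neg h01.symm]
        by_cases hj : j = i0
        · subst hj
          simp only [eq_self_iff_true, if_true]
          linear_combination ε * hdet2 + hε2
        · by_cases hj1 : j = i1
          · subst hj1
            simp only [if_neg hj, eq_self_iff_true, if_true, if_neg h01]
            ring
          · simp only [if_neg hj, if_neg hj1,
              if_neg (show ¬ i0 = j from fun h => hj h.symm)]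
            ring
      · by_cases hi1x : i = i1
        · subst hi1x
          simp only [if_neg hi, eq_self_iff_true, if_true]
          rw [sum_ite_pair i0 i1 h01 α₂ β₂ _]
          simp only [eq_self_iff_true, if_true, if_neg h01.symm]
          by_cases hj : j = i0
          · subst hj
            simp only [eq_self_iff_true, if_true, if_neg hi]
            ring
          · by_cases hj1 : j = i1
            · subst hj1
              simp only [if_neg hj, eq_self_iff_true, if_true]
              linear_combination ε * hdet2 + hε2
            · simp only [if_neg hj, if_neg hj1,
                if_neg (show ¬ i1 = j from fun h => hj1 h.symm)]
              ring
        · simp only [if_neg hi, if_neg hi1x]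
          rw [sum_ite_single i 1 _, one_mul]
          simp only [if_neg hi, if_neg hi1x]
          by_cases hj : j = i
          · rw [if_pos hj, if_pos hj.symm]
          · rw [if_neg hj, if_neg (show ¬ i = j from fun h => hj h.symm)]
    exact hdetC.mul hdetM
  -- the translation vector
  set bvec : Fin d → ℤ := fun i =>
    if i = i0 then -(infV V hV p) else if i = i1 then -(infV V hV v') else 0 with hbvec
  clear_value bvec
  refine ⟨unimodMap A bvec '' P, ⟨A, hdetA, bvec, rfl⟩, ?_⟩
  rintro x ⟨y, hy, rfl⟩
  have hy' : y ∈ convexHull ℝ (intEmbed '' (V : Set (Fin d → ℤ))) := by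
    rw [← hPV]; exact hy
  have hbp := mem_Icc_of_mem_hull V hV p hy'
  have hbv := mem_Icc_of_mem_hull V hV v' hy'
  have hWpcast : ((supV V hV p : ℤ) : ℝ) - ((infV V hV p : ℤ) : ℝ) ≤ (w1 : ℝ) := by
    have : ((Wd V hV p : ℤ) : ℝ) ≤ (w1 : ℝ) := by exact_mod_cast hWp_le
    rw [Wd] at this
    push_cast at this ⊢
    linarith
  have hWvcast : ((supV V hV v' : ℤ) : ℝ) - ((infV V hV v' : ℤ) : ℝ) ≤ (w2 : ℝ) := by
    have : ((Wd V hV v' : ℤ) : ℝ) ≤ (w2 : ℝ) := by exact_mod_cast hWv_le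
    rw [Wd] at this
    push_cast at this ⊢
    linarith
  constructor
  · show unimodMap A bvec y i0 ∈ Set.Icc (0 : ℝ) (w1 : ℝ)
    have hval : unimodMap A bvec y i0 = dualPair p y + ((bvec i0 : ℤ) : ℝ) := by
      show (∑ j, ((A i0 j : ℤ) : ℝ) * y j) + ((bvec i0 : ℤ) : ℝ) = _
      rw [dualPair]
      congr 1
      refine Finset.sum_congr rfl fun j _ => ?_
      rw [hA]
      simp
    rw [hval, hbvec]
    simp only [if_pos rfl]
    push_cast
    constructor
    · have := hbp.1; linarith
    · have := hbp.2; linarith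
  · show unimodMap A bvec y i1 ∈ Set.Icc (0 : ℝ) (w2 : ℝ)
    have hval : unimodMap A bvec y i1 = dualPair v' y + ((bvec i1 : ℤ) : ℝ) := by
      show (∑ j, ((A i1 j : ℤ) : ℝ) * y j) + ((bvec i1 : ℤ) : ℝ) = _
      rw [dualPair]
      congr 1
      refine Finset.sum_congr rfl fun j _ => ?_
      rw [hA]
      simp [h01.symm]
    rw [hval, hbvec]
    simp only [if_neg h01.symm, if_pos rfl]
    push_cast
    constructor
    · have := hbv.1; linarith
    · have := hbv.2; linarith
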